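/- Among n = 3f+1 observations of which at most f are Byzantine and honest observations lie in [Hmin, Hmax], the median of any sub-multiset of 2f+1 of these observations lies in [Hmin, Hmax]. -/

import Mathlib

/-- Median of a multiset of odd size 2f+1: its (f+1)-st smallest element. -/
noncomputable def oddMedian (f : ℕ) (s : Multiset ℝ) : ℝ :=
  (s.sort (· ≤ ·))[f]!

lemma countP_le_of_sorted_lt (l : List ℝ) (hs : l.Pairwise (· ≤ ·)) (k : ℕ) (hk : k < l.length)
    (c : ℝ) (hc : l[k] < c) (p : ℝ → Prop) [DecidablePred p] (hp : ∀ x, p x → c ≤ x) :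
    l.countP (fun x => decide (p x)) ≤ l.length - (k + 1) := by
  have hsplit := List.take_append_drop (k + 1) l
  have h1 : (l.take (k + 1)).countP (fun x => decide (p x)) = 0 := by
    rw [List.countP_eq_zero]
    intro x hx
    simp only [decide_eq_true_eq]
    intro hpx
    have hmem : ∃ i : ℕ, ∃ hi : i < (l.take (k+1)).length, (l.take (k+1))[i] = x :=
      List.mem_iff_getElem.mp hx
    obtain ⟨i, hi, hxi⟩ := hmem
    have hilen : i < k + 1 := lt_of_lt_of_le hi (by simp [List.length_take])
    have hxi' : l[i]'(lt_of_lt_of_le hilen hk) = x := by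
      rw [← hxi]; simp [List.getElem_take]
    have hle : l[i]'(lt_of_lt_of_le hilen hk) ≤ l[k] := by
      rcases eq_or_lt_of_le (Nat.lt_succ_iff.mp hilen) with h | h
      · subst h; rfl
      · exact List.pairwise_iff_getElem.mp hs i k (lt_of_lt_of_le hilen hk) hk h
    have : x < c := lt_of_le_of_lt (hxi' ▸ hle) hc
    exact absurd (hp x hpx) (not_le.mpr this)
  calc l.countP (fun x => decide (p x))
      = (l.take (k+1)).countP _ + (l.drop (k+1)).countP _ := by
        rw [← List.countP_append, hsplit]
    _ = (l.drop (k+1)).countP _ := by rw [h1, Nat.zero_add]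
    _ ≤ (l.drop (k+1)).length := List.countP_le_length
    _ = l.length - (k + 1) := List.length_drop

lemma countP_le_of_sorted_gt (l : List ℝ) (hs : l.Pairwise (· ≤ ·)) (k : ℕ) (hk : k < l.length)
    (c : ℝ) (hc : c < l[k]) (p : ℝ → Prop) [DecidablePred p] (hp : ∀ x, p x → x ≤ c) :
    l.countP (fun x => decide (p x)) ≤ k := by
  have hsplit := List.take_append_drop k l
  have h1 : (l.drop k).countP (fun x => decide (p x)) = 0 := by
    rw [List.countP_eq_zero]
    intro x hx
    simp only [decide_eq_true_eq]
    intro hpx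
    obtain ⟨i, hi, hxi⟩ := List.mem_iff_getElem.mp hx
    have hik : k + i < l.length := by
      have := hi; rw [List.length_drop] at this; omega
    have hxi' : l[k + i]'hik = x := by rw [← hxi]; simp [List.getElem_drop]
    have hle : l[k] ≤ l[k + i]'hik := by
      rcases Nat.eq_zero_or_pos i with h | h
      · subst h; rfl
      · exact List.pairwise_iff_getElem.mp hs k (k + i) hk hik (by omega)
    have : c < x := lt_of_lt_of_le hc (hxi' ▸ hle)
    exact absurd (hp x hpx) (not_le.mpr this)
  calc l.countP (fun x => decide (p x))
      = (l.take k).countP _ + (l.drop k).countP _ := by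
        rw [← List.countP_append, hsplit]
    _ = (l.take k).countP _ := by rw [h1, Nat.add_zero]
    _ ≤ (l.take k).length := List.countP_le_length
    _ ≤ k := by simp [List.length_take]

/-- Among 3f+1 observations with at most f Byzantine and honest
observations in [Hmin, Hmax], the median of any sub-multiset of 2f+1 of them
lies in [Hmin, Hmax]. -/
theorem median_of_submultiset_bounds (f : ℕ) (Hmin Hmax : ℝ)
    (H B T : Multiset ℝ)
    (hcard : Multiset.card (H + B) = 3 * f + 1)
    (hB : Multiset.card B ≤ f)
    (hHbound : ∀ x ∈ H, Hmin ≤ x ∧ x ≤ Hmax)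
    (hT : T ≤ H + B) (hTcard : Multiset.card T = 2 * f + 1) :
    Hmin ≤ oddMedian f T ∧ oddMedian f T ≤ Hmax := by
  classical
  -- decompose T into honest part and byzantine part
  have hTH : T - B ≤ H := by
    rw [Multiset.sub_le_iff_le_add]
    exact hT.trans (by rw [add_comm])
  have hdecomp : T - B + T ∩ B = T := Multiset.sub_add_inter T B
  have hTBcard : Multiset.card (T ∩ B) ≤ f :=
    le_trans (Multiset.card_le_card (Multiset.inter_le_right)) hB
  have hTHcard : f + 1 ≤ Multiset.card (T - B) := by
    have := congrArg Multiset.card hdecomp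
    rw [Multiset.card_add] at this
    omega
  set l := T.sort (· ≤ ·) with hl
  have hsort : l.Pairwise (· ≤ ·) := Multiset.pairwise_sort _ _
  have hlen : l.length = 2 * f + 1 := by
    rw [hl, Multiset.length_sort, hTcard]
  have hf : f < l.length := by omega
  have hmed : oddMedian f T = l[f] := by
    rw [oddMedian, ← hl]
    exact getElem!_pos l f hf
  -- counting honest elements
  have hcount : ∀ (p : ℝ → Prop) [DecidablePred p], (∀ x ∈ H, p x) →
      f + 1 ≤ l.countP (fun x => decide (p x)) := by
    intro p _ hpH
    have h1 : (T - B).countP p ≤ T.countP p :=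
      Multiset.countP_le_of_le _ (Multiset.sub_le_self T B)
    have h2 : (T - B).countP p = Multiset.card (T - B) := by
      rw [Multiset.countP_eq_card.mpr]
      intro x hx
      exact hpH x (Multiset.mem_of_le hTH hx)
    have h3 : T.countP p = l.countP (fun x => decide (p x)) := by
      conv_lhs => rw [← Multiset.sort_eq T (· ≤ ·)]
      rw [Multiset.coe_countP]
    rw [← h3]
    omega
  constructor
  · by_contra hlt
    push_neg at hlt
    rw [hmed] at hlt
    have := countP_le_of_sorted_lt l hsort f hf Hmin hlt (fun x => Hmin ≤ x) (fun x hx => hx)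
    have hge := hcount (fun x => Hmin ≤ x) (fun x hx => (hHbound x hx).1)
    omega
  · by_contra hgt
    push_neg at hgt
    rw [hmed] at hgt
    have := countP_le_of_sorted_gt l hsort f hf Hmax hgt (fun x => x ≤ Hmax) (fun x hx => hx)
    have hge := hcount (fun x => x ≤ Hmax) (fun x hx => (hHbound x hx).2)
    omega
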